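/- Let U ⊆ ℂⁿ × ℂⁿ be open and connected, and suppose U ∩ 𝔇 ≠ ∅, where 𝔇 = {(z, z̄) : z ∈ ℂⁿ}. If f is holomorphic on U and f vanishes at every point of 𝔇 ∩ U, then f vanishes identically on U. -/

import Mathlib

open scoped ENNReal

noncomputable section

/-- Germ inclusion `R_p ⊆ Q_p`: `R ∩ V ⊆ Q` for some open neighbourhood `V` of `p`. -/
def GermLE {E : Type*} [TopologicalSpace E] (R Q : Set E) (p : E) : Prop :=
  ∃ V : Set E, IsOpen V ∧ p ∈ V ∧ R ∩ V ⊆ Q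

/-- `R` is a real analytic subset of the open set `Ω`. -/
def IsRealAnalyticSubset {E : Type*} [NormedAddCommGroup E] [NormedSpace ℝ E]
    (Ω R : Set E) : Prop :=
  R ⊆ Ω ∧ ∀ p ∈ Ω, ∃ U : Set E, IsOpen U ∧ p ∈ U ∧ U ⊆ Ω ∧
    ∃ (k : ℕ) (φ : Fin k → E → ℝ),
      (∀ i, AnalyticOnNhd ℝ (φ i) U) ∧ R ∩ U = {x ∈ U | ∀ i, φ i x = 0}

/-- `X` is a complex analytic subset of the open set `W`. -/
def IsComplexAnalyticSubset {E : Type*} [NormedAddCommGroup E] [NormedSpace ℂ E]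
    (W X : Set E) : Prop :=
  X ⊆ W ∧ ∀ p ∈ W, ∃ U : Set E, IsOpen U ∧ p ∈ U ∧ U ⊆ W ∧
    ∃ (k : ℕ) (φ : Fin k → E → ℂ),
      (∀ i, AnalyticOnNhd ℂ (φ i) U) ∧ X ∩ U = {x ∈ U | ∀ i, φ i x = 0}

/-- The local (Hausdorff) dimension of `R` at `p`. -/
def locDim {E : Type*} [EMetricSpace E] (R : Set E) (p : E) : ℝ≥0∞ :=
  ⨅ (U : Set E) (_ : IsOpen U) (_ : p ∈ U), dimH (R ∩ U)

/-- `X` represents the smallest complex analytic germ at `p` containing the germ of `R`. -/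
def IsSmallestComplexGermAt {E : Type*} [NormedAddCommGroup E] [NormedSpace ℂ E]
    (R : Set E) (p : E) (X : Set E) : Prop :=
  (∃ U : Set E, IsOpen U ∧ p ∈ U ∧ IsComplexAnalyticSubset U X) ∧
  GermLE R X p ∧
  ∀ (U' Y : Set E), IsOpen U' → p ∈ U' → IsComplexAnalyticSubset U' Y →
    GermLE R Y p → GermLE X Y p

/-- `S` is closed and nowhere dense in `R` (with its subspace topology). -/
def ClosedNowhereDenseIn {E : Type*} [TopologicalSpace E] (R S : Set E) : Prop :=
  S ⊆ R ∧ IsClosed {x : R | (x : E) ∈ S} ∧ interior {x : R | (x : E) ∈ S} = ∅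

/-- The totally real embedding `𝔡(ζ) = (ζ, ζ̄)` of `ℂⁿ` into `ℂ²ⁿ`. -/
def dd (n : ℕ) (ζ : Fin n → ℂ) : (Fin n → ℂ) × (Fin n → ℂ) :=
  (ζ, fun j => (starRingEnd ℂ) (ζ j))


namespace St10Aux
open Complex Filter


/-- Key lemma: an analytic function on a ball around a real point of `ℂ^m`
vanishing at all real points of the ball vanishes on the ball. -/
lemma key {m : ℕ} (g : (Fin m → ℂ) → ℂ) (v₀ : Fin m → ℂ) (hv₀ : ∀ i, (v₀ i).im = 0)
    (r : ℝ) (hr : 0 < r) (hg : AnalyticOnNhd ℂ g (Metric.ball v₀ r))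
    (h0 : ∀ v ∈ Metric.ball v₀ r, (∀ i, (v i).im = 0) → g v = 0) :
    ∀ v ∈ Metric.ball v₀ r, g v = 0 := by
  have H : ∀ k : ℕ, ∀ v ∈ Metric.ball v₀ r,
      (∀ i : Fin m, k ≤ (i : ℕ) → (v i).im = 0) → g v = 0 := by
    intro k
    induction k with
    | zero => exact fun v hv h => h0 v hv fun i => h i (Nat.zero_le _)
    | succ k ih =>
      intro v hv hreal
      by_cases hk : k < m
      · set j : Fin m := ⟨k, hk⟩ with hj
        set D := Metric.ball (v₀ j) r with hD
        have hDsub : ∀ w ∈ D, Function.update v j w ∈ Metric.ball v₀ r := by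
          intro w hw
          rw [Metric.mem_ball, dist_pi_lt_iff hr]
          intro i
          rcases eq_or_ne i j with h | h
          · subst h; simpa using Metric.mem_ball.1 hw
          · rw [Function.update_of_ne h]
            exact lt_of_le_of_lt (dist_le_pi_dist v v₀ i) hv
        set h : ℂ → ℂ := fun w => g (Function.update v j w) with hh_def
        have hupd : (fun w : ℂ => Function.update v j w)
            = fun w => Function.update v j 0 + Pi.single j w := by
          funext w i
          rcases eq_or_ne i j with h | h
          · subst h; simp
          · simp [Function.update_of_ne h, Pi.single_apply, h]
        have hh : AnalyticOnNhd ℂ h D := by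
          intro w hw
          have hsingle : AnalyticAt ℂ (fun w : ℂ => (Pi.single j w : Fin m → ℂ)) w := by
            apply AnalyticAt.pi (f := fun (i : Fin m) (w : ℂ) => (Pi.single j w : Fin m → ℂ) i)
            intro i
            rcases eq_or_ne i j with hij | hij
            · subst hij
              simp only [Pi.single_eq_same]
              exact analyticAt_id
            · simp only [Pi.single_eq_of_ne hij]
              exact analyticAt_const
          have hu : AnalyticAt ℂ (fun w : ℂ => Function.update v j w) w := by
            rw [hupd]
            exact analyticAt_const.add hsingle
          exact (hg _ (hDsub w hw)).comp hu
        have hzero : ∀ w ∈ D, w.im = 0 → h w = 0 := by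
          intro w hw hwim
          refine ih (Function.update v j w) (hDsub w hw) ?_
          intro i hi
          rcases eq_or_ne i j with h | h
          · subst h; simpa using hwim
          · rw [Function.update_of_ne h]
            refine hreal i ?_
            rcases lt_or_eq_of_le hi with h' | h'
            · exact h'
            · exact absurd (Fin.ext h'.symm : i = j) h
        have hfreq : ∃ᶠ w in nhdsWithin (v₀ j) {(v₀ j)}ᶜ, h w = 0 := by
          set u : ℕ → ℂ := fun l => v₀ j + ((r / (2 * (l + 1)) : ℝ) : ℂ) with hu_def
          have hpos : ∀ l : ℕ, 0 < r / (2 * ((l : ℝ) + 1)) := by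
            intro l
            positivity
          have hlt : ∀ l : ℕ, r / (2 * ((l : ℝ) + 1)) < r := by
            intro l
            rw [div_lt_iff₀ (by positivity)]
            nlinarith [hpos l, Nat.cast_nonneg (α := ℝ) l]
          have htend : Tendsto u atTop (nhdsWithin (v₀ j) {(v₀ j)}ᶜ) := by
            rw [tendsto_nhdsWithin_iff]
            constructor
            · have h1 : Tendsto (fun l : ℕ => (r / (2 * ((l : ℝ) + 1)))) atTop (nhds 0) := by
                apply Tendsto.div_atTop (tendsto_const_nhds (x := r))
                apply Tendsto.const_mul_atTop two_pos
                exact tendsto_atTop_add_const_right _ _ tendsto_natCast_atTop_atTop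
              have h3 : Tendsto (fun l : ℕ => ((r / (2 * ((l : ℝ) + 1)) : ℝ) : ℂ)) atTop
                  (nhds 0) := by
                rw [show ((0 : ℂ)) = ((0 : ℝ) : ℂ) by simp]
                exact (Complex.continuous_ofReal.tendsto 0).comp h1
              have h4 := (tendsto_const_nhds (x := v₀ j) (f := atTop (α := ℕ))).add h3
              rw [add_zero] at h4
              exact h4
            · refine Eventually.of_forall fun l => ?_
              simp only [hu_def, Set.mem_compl_iff, Set.mem_singleton_iff]
              intro hcon
              have : ((r / (2 * ((l : ℝ) + 1)) : ℝ) : ℂ) = 0 := by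
                have := hcon
                rwa [add_eq_left] at this
              exact (hpos l).ne' (by exact_mod_cast this)
          refine htend.frequently (Eventually.of_forall fun l => ?_).frequently
          have him : (u l).im = 0 := by
            simp only [hu_def, Complex.add_im, Complex.ofReal_im, hv₀ j, add_zero]
          refine hzero (u l) ?_ him
          rw [hD, Metric.mem_ball, hu_def]
          have hd : dist (v₀ j + ((r / (2 * ((l : ℝ) + 1)) : ℝ) : ℂ)) (v₀ j)
              = |r / (2 * ((l : ℝ) + 1))| := by
            rw [dist_self_add_left]
            exact Complex.norm_real _
          rw [hd, abs_of_pos (hpos l)]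
          exact hlt l
        have hEq := hh.eqOn_zero_of_preconnected_of_frequently_eq_zero
          (convex_ball (v₀ j) r).isPreconnected (Metric.mem_ball_self hr) hfreq
        have hvj : v j ∈ D := lt_of_le_of_lt (dist_le_pi_dist v v₀ j) hv
        have := hEq hvj
        simpa [hh_def, Function.update_eq_self] using this
      · refine ih v hv fun i hi => ?_
        exact absurd (lt_of_lt_of_le i.isLt (not_lt.1 hk)) (not_lt.2 hi)
  exact fun v hv => H m v hv fun i hi => absurd i.isLt (not_lt.2 hi)



variable (n : ℕ)

/-- The inverse of the complexified real-coordinates map. -/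
def Psi (v : Fin (n + n) → ℂ) : (Fin n → ℂ) × (Fin n → ℂ) :=
  (fun j => (v (Fin.castAdd n j) - Complex.I * v (Fin.natAdd n j)) / 2,
   fun j => (v (Fin.castAdd n j) + Complex.I * v (Fin.natAdd n j)) / 2)

def PsiInv (x : (Fin n → ℂ) × (Fin n → ℂ)) : Fin (n + n) → ℂ :=
  Fin.addCases (fun j => x.1 j + x.2 j) (fun j => Complex.I * (x.1 j - x.2 j))

lemma psi_psiInv (x : (Fin n → ℂ) × (Fin n → ℂ)) : Psi n (PsiInv n x) = x := by
  unfold Psi PsiInv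
  refine Prod.ext ?_ ?_ <;> funext j <;> simp only [Fin.addCases_left, Fin.addCases_right]
  · linear_combination ((x.2 j - x.1 j) / 2) * Complex.I_mul_I
  · linear_combination ((x.1 j - x.2 j) / 2) * Complex.I_mul_I

lemma continuous_psi : Continuous (Psi n) := by
  unfold Psi
  apply Continuous.prodMk <;> exact continuous_pi fun j => by fun_prop

lemma continuous_psiInv : Continuous (PsiInv n) := by
  apply continuous_pi
  intro i
  induction i using Fin.addCases with
  | left j => simp only [PsiInv, Fin.addCases_left]; fun_prop
  | right j => simp only [PsiInv, Fin.addCases_right]; fun_prop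

lemma analyticAt_psi (v : Fin (n + n) → ℂ) : AnalyticAt ℂ (Psi n) v := by
  unfold Psi
  apply AnalyticAt.prod <;>
  · apply AnalyticAt.pi
    intro j
    apply AnalyticAt.div _ analyticAt_const two_ne_zero
    first
    | exact AnalyticAt.sub ((ContinuousLinearMap.proj (R := ℂ) (Fin.castAdd n j)).analyticAt v)
        (analyticAt_const.mul ((ContinuousLinearMap.proj (R := ℂ) (Fin.natAdd n j)).analyticAt v))
    | exact AnalyticAt.add ((ContinuousLinearMap.proj (R := ℂ) (Fin.castAdd n j)).analyticAt v)
        (analyticAt_const.mul ((ContinuousLinearMap.proj (R := ℂ) (Fin.natAdd n j)).analyticAt v))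

lemma psi_mem_range_dd (v : Fin (n + n) → ℂ) (hv : ∀ i, (v i).im = 0) :
    Psi n v ∈ Set.range (dd n) := by
  refine ⟨(Psi n v).1, Prod.ext rfl ?_⟩
  funext j
  have hc : ∀ i, (starRingEnd ℂ) (v i) = v i := fun i => Complex.conj_eq_iff_im.mpr (hv i)
  show (starRingEnd ℂ) ((Psi n v).1 j) = (Psi n v).2 j
  simp only [Psi, map_div₀, map_sub, map_mul, Complex.conj_I, hc, map_ofNat]
  ring

lemma psiInv_dd_im (ζ : Fin n → ℂ) (i : Fin (n + n)) : ((PsiInv n (dd n ζ)) i).im = 0 := by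
  induction i using Fin.addCases with
  | left j =>
    simp only [PsiInv, dd, Fin.addCases_left, Complex.add_im, Complex.conj_im]
    ring
  | right j =>
    simp only [PsiInv, dd, Fin.addCases_right, Complex.mul_im, Complex.I_re, Complex.I_im,
      Complex.sub_re, Complex.conj_re, Complex.sub_im, Complex.conj_im]
    ring

end St10Aux

/-- A holomorphic function on a connected open set `U ⊆ ℂⁿ × ℂⁿ` meeting
the totally real subspace `𝔇 = {(z, z̄)}` which vanishes on `𝔇 ∩ U` vanishes identically. -/
theorem statement10 {n : ℕ} (U : Set ((Fin n → ℂ) × (Fin n → ℂ)))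
    (hUopen : IsOpen U) (hUconn : IsConnected U)
    (hUD : (U ∩ Set.range (dd n)).Nonempty)
    (f : (Fin n → ℂ) × (Fin n → ℂ) → ℂ) (hf : AnalyticOnNhd ℂ f U)
    (hvan : ∀ x ∈ Set.range (dd n) ∩ U, f x = 0) :
    ∀ x ∈ U, f x = 0 := by
  obtain ⟨p, hpU, hpD⟩ := hUD
  obtain ⟨ζ₀, rfl⟩ := hpD
  set v₀ := St10Aux.PsiInv n (dd n ζ₀) with hv₀def
  have hΨv₀ : St10Aux.Psi n v₀ = dd n ζ₀ := St10Aux.psi_psiInv n _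
  have hOpen : IsOpen (St10Aux.Psi n ⁻¹' U) := hUopen.preimage (St10Aux.continuous_psi n)
  have hv₀mem : v₀ ∈ St10Aux.Psi n ⁻¹' U := by rw [Set.mem_preimage, hΨv₀]; exact hpU
  obtain ⟨r, hr, hball⟩ := Metric.isOpen_iff.1 hOpen v₀ hv₀mem
  have hg : AnalyticOnNhd ℂ (fun v => f (St10Aux.Psi n v)) (Metric.ball v₀ r) :=
    fun v hv => (hf _ (hball hv)).comp (St10Aux.analyticAt_psi n v)
  have h0 : ∀ v ∈ Metric.ball v₀ r, (∀ i, (v i).im = 0) → f (St10Aux.Psi n v) = 0 :=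
    fun v hv hreal => hvan _ ⟨St10Aux.psi_mem_range_dd n v hreal, hball hv⟩
  have hkey := St10Aux.key _ v₀ (St10Aux.psiInv_dd_im n ζ₀) r hr hg h0
  have hev : f =ᶠ[nhds (dd n ζ₀)] 0 := by
    have hmem : St10Aux.PsiInv n ⁻¹' (Metric.ball v₀ r) ∈ nhds (dd n ζ₀) := by
      have hob : IsOpen (Metric.ball v₀ r) := Metric.isOpen_ball
      have hop : IsOpen (St10Aux.PsiInv n ⁻¹' (Metric.ball v₀ r)) :=
        hob.preimage (St10Aux.continuous_psiInv n)
      have hmem2 : St10Aux.PsiInv n (dd n ζ₀) ∈ Metric.ball v₀ r := by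
        rw [← hv₀def]
        exact Metric.mem_ball_self hr
      exact hop.mem_nhds hmem2
    filter_upwards [hmem] with x hx
    simpa [St10Aux.psi_psiInv n x] using hkey _ hx
  exact fun x hx =>
    hf.eqOn_zero_of_preconnected_of_eventuallyEq_zero hUconn.isPreconnected hpU hev hx
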